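/- Let (Z, Y) be random variables with Z ∈ [0,1], Y ∈ {0,1}. Let ℬ = {I₁, ..., I_B} be a partition of [0,1] into intervals and suppose the function h*(z) := E[Y | Z = z] is monotone non-decreasing in z. If the binning is α-well-balanced, i.e., P[Z ∈ I_b] ≤ α/B for all b, then the sharpness risk E[(E[Y | β(Z)] − E[Y | Z])²] ≤ α/B, where β(Z) is the index of the bin containing Z. -/

import Mathlib

open MeasureTheory

theorem stmt_7 {Ω : Type*} [MeasurableSpace Ω] (ℙ : Measure Ω) [IsProbabilityMeasure ℙ]
    (Z Y : Ω → ℝ) (hZ : Measurable Z) (hY : Measurable Y)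
    (hZrange : ∀ ω, Z ω ∈ Set.Icc (0:ℝ) 1) (hYrange : ∀ ω, Y ω = 0 ∨ Y ω = 1)
    (B : ℕ) (hB : 0 < B) (I : Fin B → Set ℝ)
    (hImeas : ∀ b, MeasurableSet (I b)) (hIint : ∀ b, (I b).OrdConnected)
    (hIdisj : Pairwise (Function.onFun Disjoint I))
    (hIcover : (⋃ b, I b) = Set.Icc (0:ℝ) 1)
    (β : ℝ → Fin B) (hβ : ∀ z ∈ Set.Icc (0:ℝ) 1, z ∈ I (β z))
    (hstar : ℝ → ℝ) (hmono : MonotoneOn hstar (Set.Icc (0:ℝ) 1))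
    (hrange : ∀ z ∈ Set.Icc (0:ℝ) 1, hstar z ∈ Set.Icc (0:ℝ) 1)
    (hversion : (fun ω => hstar (Z ω)) =ᵐ[ℙ] ℙ[Y | MeasurableSpace.comap Z inferInstance])
    (μbar : Fin B → ℝ)
    (hμbar : ∀ b, μbar b =
      (∫ ω in {ω | Z ω ∈ I b}, Y ω ∂ℙ) / (ℙ {ω | Z ω ∈ I b}).toReal)
    (hpos : ∀ b, ℙ {ω | Z ω ∈ I b} ≠ 0)
    (α : ℝ) (hα : 1 ≤ α) (hbal : ∀ b, (ℙ {ω | Z ω ∈ I b}).toReal ≤ α / B) :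
    ∫ ω, (μbar (β (Z ω)) - hstar (Z ω)) ^ 2 ∂ℙ ≤ α / B := by
  classical
  set g : Ω → ℝ := fun ω => hstar (Z ω) with hgdef
  set s : Fin B → Set Ω := fun b => {ω | Z ω ∈ I b} with hsdef
  set J : Fin B → Set ℝ := fun b => I b ∩ Set.Icc (0:ℝ) 1 with hJdef
  -- basic facts
  have hsmeas : ∀ b, MeasurableSet (s b) := fun b => hZ (hImeas b)
  have hgi : Integrable g ℙ :=
    (integrable_condExp (m := MeasurableSpace.comap Z inferInstance) (f := Y)).congr
      hversion.symm
  have hJmem : ∀ b ω, ω ∈ s b → Z ω ∈ J b := fun b ω hω => ⟨hω, hZrange ω⟩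
  have hJne : ∀ b, (J b).Nonempty := by
    intro b
    by_contra hne
    rw [Set.not_nonempty_iff_eq_empty] at hne
    apply hpos b
    have : s b = ∅ := by
      ext ω
      simp only [Set.mem_empty_iff_false, iff_false]
      intro hω
      have := hJmem b ω hω
      rw [hne] at this
      exact this
    rw [hsdef] at this
    simp only [this]
    exact measure_empty
  have hJsub : ∀ b, hstar '' J b ⊆ Set.Icc (0:ℝ) 1 := by
    rintro b x ⟨z, hz, rfl⟩
    exact hrange z hz.2
  have hJim : ∀ b, (hstar '' J b).Nonempty := fun b => (hJne b).image _
  have hbdd : ∀ b, BddAbove (hstar '' J b) ∧ BddBelow (hstar '' J b) := fun b =>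
    ⟨((Metric.isBounded_Icc (0:ℝ) 1).subset (hJsub b)).bddAbove,
     ((Metric.isBounded_Icc (0:ℝ) 1).subset (hJsub b)).bddBelow⟩
  set m : Fin B → ℝ := fun b => sInf (hstar '' J b) with hmdef
  set M : Fin B → ℝ := fun b => sSup (hstar '' J b) with hMdef
  have hmle : ∀ b, ∀ z ∈ J b, m b ≤ hstar z := fun b z hz =>
    csInf_le (hbdd b).2 ⟨z, hz, rfl⟩
  have hleM : ∀ b, ∀ z ∈ J b, hstar z ≤ M b := fun b z hz =>
    le_csSup (hbdd b).1 ⟨z, hz, rfl⟩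
  have hm0 : ∀ b, 0 ≤ m b := fun b =>
    le_csInf (hJim b) (fun x hx => (hJsub b hx).1)
  have hM1 : ∀ b, M b ≤ 1 := fun b =>
    csSup_le (hJim b) (fun x hx => (hJsub b hx).2)
  have hmM : ∀ b, m b ≤ M b := by
    intro b
    obtain ⟨z, hz⟩ := hJne b
    exact (hmle b z hz).trans (hleM b z hz)
  -- measure of each bin
  have hPfin : ∀ b, ℙ (s b) ≠ ⊤ := fun b => measure_ne_top ℙ (s b)
  have hPpos : ∀ b, 0 < (ℙ (s b)).toReal := by
    intro b
    exact ENNReal.toReal_pos (hpos b) (hPfin b)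
  -- μbar b ∈ [m b, M b]
  have hYint : Integrable Y ℙ := by
    refine Integrable.mono' (integrable_const (1:ℝ)) hY.aestronglyMeasurable ?_
    filter_upwards with ω
    rcases hYrange ω with h | h <;> rw [h] <;> norm_num
  have hkey : ∀ b, ∫ ω in s b, Y ω ∂ℙ = ∫ ω in s b, g ω ∂ℙ := by
    intro b
    have hm : MeasurableSpace.comap Z inferInstance ≤ (inferInstance : MeasurableSpace Ω) :=
      hZ.comap_le
    have hsm : MeasurableSet[MeasurableSpace.comap Z inferInstance] (s b) :=
      ⟨I b, hImeas b, rfl⟩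
    rw [← setIntegral_condExp hm hYint hsm]
    exact setIntegral_congr_ae (hsmeas b) (hversion.mono fun ω hω _ => hω.symm)
  have hμmem : ∀ b, m b ≤ μbar b ∧ μbar b ≤ M b := by
    intro b
    have hgint : IntegrableOn g (s b) ℙ := hgi.integrableOn
    have h1 : (m b) * (ℙ (s b)).toReal ≤ ∫ ω in s b, g ω ∂ℙ := by
      have h0 : 0 ≤ ∫ ω in s b, (g ω - m b) ∂ℙ :=
        setIntegral_nonneg (hsmeas b) (fun ω hω => sub_nonneg.2 (hmle b _ (hJmem b ω hω)))
      have h2 : ∫ ω in s b, (g ω - m b) ∂ℙ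
          = (∫ ω in s b, g ω ∂ℙ) - (m b) * (ℙ (s b)).toReal := by
        rw [integral_sub hgint (integrableOn_const (hPfin b)),
          setIntegral_const, smul_eq_mul, measureReal_def, mul_comm]
      linarith [h0, h2.symm ▸ h0]
    have h2 : ∫ ω in s b, g ω ∂ℙ ≤ (M b) * (ℙ (s b)).toReal := by
      have h0 : 0 ≤ ∫ ω in s b, ((M b) - g ω) ∂ℙ :=
        setIntegral_nonneg (hsmeas b) (fun ω hω => sub_nonneg.2 (hleM b _ (hJmem b ω hω)))
      have h2' : ∫ ω in s b, ((M b) - g ω) ∂ℙ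
          = (M b) * (ℙ (s b)).toReal - ∫ ω in s b, g ω ∂ℙ := by
        rw [integral_sub (integrableOn_const (hPfin b) : IntegrableOn (fun _ => M b) (s b) ℙ) hgint,
          setIntegral_const, smul_eq_mul, measureReal_def, mul_comm]
      linarith
    have this : μbar b = (∫ ω in s b, Y ω ∂ℙ) / (ℙ (s b)).toReal := hμbar b
    constructor
    · rw [this, le_div_iff₀ (hPpos b), hkey b]
      exact h1
    · rw [this, div_le_iff₀ (hPpos b), hkey b]
      exact h2
  -- ordering of bins and disjointness of oscillation intervals
  have horder : ∀ b b', b ≠ b' → M b ≤ m b' ∨ M b' ≤ m b := by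
    intro b b' hne
    obtain ⟨x, hx⟩ := hJne b
    obtain ⟨y, hy⟩ := hJne b'
    have hdisj : Disjoint (I b) (I b') := hIdisj hne
    have hxy : x ≠ y := by
      rintro rfl
      exact (Set.disjoint_left.1 hdisj hx.1) hy.1
    -- claim: either all of J b ≤ all of J b', or conversely
    have hcase : (∀ u ∈ J b, ∀ v ∈ J b', u ≤ v) ∨ (∀ v ∈ J b', ∀ u ∈ J b, v ≤ u) := by
      rcases lt_or_gt_of_ne hxy with hlt | hgt
      · left
        intro u hu v hv
        by_contra hc
        push_neg at hc
        -- v < u, with x < y : derive contradiction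
        rcases le_total u y with huy | hyu
        · -- v < u ≤ y, and v, y ∈ J b', so u ∈ [v,y] ⊆ I b'
          have : u ∈ I b' := (hIint b').out hv.1 hy.1 ⟨hc.le, huy⟩
          exact Set.disjoint_left.1 hdisj hu.1 this
        · -- x < y ≤ u, x, u ∈ J b so y ∈ I b
          have : y ∈ I b := (hIint b).out hx.1 hu.1 ⟨hlt.le, hyu⟩
          exact Set.disjoint_left.1 hdisj this hy.1
      · right
        intro v hv u hu
        by_contra hc
        push_neg at hc
        rcases le_total v x with hvx | hxv
        · have : v ∈ I b := (hIint b).out hu.1 hx.1 ⟨hc.le, hvx⟩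
          exact Set.disjoint_left.1 hdisj this hv.1
        · have : x ∈ I b' := (hIint b').out hy.1 hv.1 ⟨hgt.le, hxv⟩
          exact Set.disjoint_left.1 hdisj hx.1 this
    rcases hcase with h | h
    · left
      apply csSup_le (hJim b)
      rintro w ⟨u, hu, rfl⟩
      apply le_csInf (hJim b')
      rintro w' ⟨v, hv, rfl⟩
      exact hmono hu.2 hv.2 (h u hu v hv)
    · right
      apply csSup_le (hJim b')
      rintro w ⟨v, hv, rfl⟩
      apply le_csInf (hJim b)
      rintro w' ⟨u, hu, rfl⟩
      exact hmono hv.2 hu.2 (h v hv u hu)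
  -- sum of oscillations ≤ 1 via Lebesgue measure
  have hosc : ∑ b : Fin B, (M b - m b) ≤ 1 := by
    have hdisj : Pairwise (Function.onFun Disjoint (fun b => Set.Ioo (m b) (M b))) := by
      intro b b' hne
      simp only [Function.onFun]
      rw [Set.disjoint_left]
      intro z hz hz'
      rcases horder b b' hne with h | h
      · linarith [hz.2, hz'.1]
      · linarith [hz.1, hz'.2]
    have hsub : (⋃ b, Set.Ioo (m b) (M b)) ⊆ Set.Icc (0:ℝ) 1 := by
      apply Set.iUnion_subset
      intro b z hz
      exact ⟨(hm0 b).trans hz.1.le, hz.2.le.trans (hM1 b)⟩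
    have hvol : (∑ b : Fin B, MeasureTheory.volume (Set.Ioo (m b) (M b))) ≤ 1 := by
      rw [← tsum_fintype (L := SummationFilter.unconditional (Fin B)), ← MeasureTheory.measure_iUnion hdisj (fun b => measurableSet_Ioo)]
      calc MeasureTheory.volume (⋃ b, Set.Ioo (m b) (M b))
          ≤ MeasureTheory.volume (Set.Icc (0:ℝ) 1) := measure_mono hsub
        _ = 1 := by simp [Real.volume_Icc]
    have heach : ∀ b : Fin B, MeasureTheory.volume (Set.Ioo (m b) (M b))
        = ENNReal.ofReal (M b - m b) := fun b => Real.volume_Ioo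
    rw [Finset.sum_congr rfl (fun b _ => heach b)] at hvol
    have := ENNReal.toReal_mono (by simp) hvol
    rw [ENNReal.toReal_sum (fun b _ => ENNReal.ofReal_ne_top)] at this
    simp only [ENNReal.toReal_one] at this
    calc ∑ b : Fin B, (M b - m b)
        = ∑ b : Fin B, (ENNReal.ofReal (M b - m b)).toReal := by
          apply Finset.sum_congr rfl
          intro b _
          rw [ENNReal.toReal_ofReal (sub_nonneg.2 (hmM b))]
      _ ≤ 1 := this
  -- pointwise bound and indicator decomposition
  have hβs : ∀ ω, ω ∈ s (β (Z ω)) := fun ω => hβ (Z ω) (hZrange ω)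
  have hβuniq : ∀ ω b, ω ∈ s b → b = β (Z ω) := by
    intro ω b hω
    by_contra hne
    exact Set.disjoint_left.1 (hIdisj hne) hω (hβs ω)
  set F : Ω → ℝ := fun ω =>
    ∑ b : Fin B, Set.indicator (s b) (fun _ => (M b - m b) ^ 2) ω with hFdef
  have hFeq : ∀ ω, F ω = (M (β (Z ω)) - m (β (Z ω))) ^ 2 := by
    intro ω
    simp only [hFdef]
    rw [Finset.sum_eq_single (β (Z ω))]
    · exact Set.indicator_of_mem (hβs ω) _
    · intro b _ hne
      apply Set.indicator_of_notMem
      intro hω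
      exact hne (hβuniq ω b hω)
    · intro h
      exact absurd (Finset.mem_univ _) h
  have hFint : Integrable F ℙ := by
    apply integrable_finset_sum
    intro b _
    exact (integrable_const _).indicator (hsmeas b)
  have hmain : ∀ ω, (μbar (β (Z ω)) - g ω) ^ 2 ≤ F ω := by
    intro ω
    rw [hFeq ω]
    set b := β (Z ω)
    have hzJ : Z ω ∈ J b := hJmem b ω (hβs ω)
    have h1 : m b ≤ g ω := hmle b _ hzJ
    have h2 : g ω ≤ M b := hleM b _ hzJ
    have h3 := (hμmem b).1
    have h4 := (hμmem b).2
    apply sq_le_sq'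
    · linarith
    · linarith
  -- put everything together
  calc ∫ ω, (μbar (β (Z ω)) - hstar (Z ω)) ^ 2 ∂ℙ
      ≤ ∫ ω, F ω ∂ℙ := by
        apply integral_mono_of_nonneg
        · filter_upwards with ω using sq_nonneg _
        · exact hFint
        · filter_upwards with ω using hmain ω
    _ = ∑ b : Fin B, ((ℙ (s b)).toReal * (M b - m b) ^ 2) := by
        simp only [hFdef]
        rw [integral_finset_sum _ (fun b _ => (integrable_const _).indicator (hsmeas b))]
        apply Finset.sum_congr rfl
        intro b _
        rw [integral_indicator_const _ (hsmeas b), smul_eq_mul, measureReal_def]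
    _ ≤ ∑ b : Fin B, ((α / B) * (M b - m b)) := by
        apply Finset.sum_le_sum
        intro b _
        have h1 : (M b - m b) ^ 2 ≤ M b - m b := by
          nlinarith [hmM b, hm0 b, hM1 b]
        have h2 : (ℙ (s b)).toReal ≤ α / B := hbal b
        have h3 : (0:ℝ) ≤ M b - m b := sub_nonneg.2 (hmM b)
        have h4 : (0:ℝ) ≤ (ℙ (s b)).toReal := ENNReal.toReal_nonneg
        nlinarith [sq_nonneg (M b - m b)]
    _ = (α / B) * ∑ b : Fin B, (M b - m b) := by rw [Finset.mul_sum]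
    _ ≤ (α / B) * 1 := by
        apply mul_le_mul_of_nonneg_left hosc
        positivity
    _ = α / B := mul_one _
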